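/- Let z : ℤ → ℝ be positive, S_n = (1+√(1+4z_n²z_{n-1}²))/(2z_n z_{n-1}), and φ^±_n the product-ansatz sequences φ⁺_n = z_n ∏_{ℓ≤n} S_ℓ, φ⁻_n = z_n / ∏_{ℓ≤n} S_ℓ. Then (Δφ⁺)_n/φ⁺_n = (Δφ⁻)_n/φ⁻_n for all n; i.e., both φ⁺ and φ⁻ solve the same discrete Schrödinger equation -Δφ + V^{[z]}φ = 0 with V^{[z]}_n := (z_{n+1}/z_n)S_{n+1} + z_{n-1}/(z_n S_n) - 2. -/

import Mathlib

private lemma prodIccTop (f : ℤ → ℝ) {a b : ℤ} (h : a ≤ b + 1) :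
    ∏ x ∈ Finset.Icc a (b + 1), f x = (∏ x ∈ Finset.Icc a b, f x) * f (b + 1) := by
  have : Finset.Icc a (b + 1) = insert (b + 1) (Finset.Icc a b) := by
    ext x; simp only [Finset.mem_Icc, Finset.mem_insert]; omega
  rw [this, Finset.prod_insert (by simp), mul_comm]

private lemma keyalg (s t a b c P : ℝ) (ha : a ≠ 0) (hb : b ≠ 0) (hc : c ≠ 0)
    (hs : s ≠ 0) (ht : t ≠ 0) (hP : P ≠ 0)
    (k1 : a * b * s ^ 2 = s + a * b) (k2 : c * a * t ^ 2 = t + c * a) :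
    -(c * (P * s * t)⁻¹ + b * P⁻¹ - 2 * (a * (P * s)⁻¹))
      + ((c / a) * t + b / (a * s) - 2) * (a * (P * s)⁻¹) = 0 := by
  field_simp
  refine mul_left_cancel₀ ha ?_
  linear_combination s * k2 - t * k1

theorem discrete_bohl_same_equation
    (z : ℤ → ℝ) (hz : ∀ n, 0 < z n)
    (S : ℤ → ℝ)
    (hS : ∀ n, S n = (1 + Real.sqrt (1 + 4 * (z n) ^ 2 * (z (n - 1)) ^ 2))
      / (2 * z n * z (n - 1)))
    (m : ℤ) (φp φm : ℤ → ℝ)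
    (hφp : ∀ n, φp n = z n * ∏ ℓ ∈ Finset.Icc (m + 1) n, S ℓ)
    (hφm : ∀ n, φm n = z n * (∏ ℓ ∈ Finset.Icc (m + 1) n, S ℓ)⁻¹)
    (Vz : ℤ → ℝ)
    (hVz : ∀ n, Vz n = (z (n + 1) / z n) * S (n + 1) + z (n - 1) / (z n * S n) - 2) :
    ∀ n ≥ m + 1,
      ((φp (n + 1) + φp (n - 1) - 2 * φp n) / φp n
        = (φm (n + 1) + φm (n - 1) - 2 * φm n) / φm n) ∧
      (-(φp (n + 1) + φp (n - 1) - 2 * φp n) + Vz n * φp n = 0) ∧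
      (-(φm (n + 1) + φm (n - 1) - 2 * φm n) + Vz n * φm n = 0) := by
  have hSpos : ∀ n, 0 < S n := by
    intro n
    rw [hS n]
    apply div_pos
    · have := Real.sqrt_nonneg (1 + 4 * (z n) ^ 2 * (z (n - 1)) ^ 2); linarith
    · have := hz n; have := hz (n - 1); positivity
  have hkey : ∀ n : ℤ, (z n * z (n - 1)) * S n ^ 2 = S n + z n * z (n - 1) := by
    intro n
    have hz1 := hz n; have hz2 := hz (n - 1)
    set a := z n * z (n - 1) with ha
    have hapos : 0 < a := mul_pos hz1 hz2
    have hd : (0:ℝ) ≤ 1 + 4 * (z n) ^ 2 * (z (n - 1)) ^ 2 := by positivity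
    have hsq : Real.sqrt (1 + 4 * (z n) ^ 2 * (z (n - 1)) ^ 2) ^ 2
        = 1 + 4 * (z n) ^ 2 * (z (n - 1)) ^ 2 := Real.sq_sqrt hd
    rw [hS n]
    have h2a : (2 * z n * z (n - 1)) ≠ 0 := by positivity
    field_simp
    linear_combination (z n * z (n - 1)) * hsq
  intro n hn
  -- products
  have hPnext := prodIccTop S (by omega : m + 1 ≤ n + 1)
  have hPmid : ∏ x ∈ Finset.Icc (m + 1) n, S x
      = (∏ x ∈ Finset.Icc (m + 1) (n - 1), S x) * S n := by
    have := prodIccTop S (by omega : m + 1 ≤ (n - 1) + 1)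
    simpa using this
  set P := ∏ x ∈ Finset.Icc (m + 1) (n - 1), S x with hPdef
  have hPpos : 0 < P := Finset.prod_pos fun i _ => hSpos i
  have hsn := hSpos n; have hsn1 := hSpos (n + 1)
  have hzn := hz n; have hzn1 := hz (n - 1); have hzn2 := hz (n + 1)
  have k1 := hkey n
  have k2 : z (n + 1) * z n * S (n + 1) ^ 2 = S (n + 1) + z (n + 1) * z n := by
    have := hkey (n + 1); simpa using this
  have hφpn : φp n = z n * (P * S n) := by rw [hφp n, hPmid]
  have hφpn1 : φp (n + 1) = z (n + 1) * (P * S n * S (n + 1)) := by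
    rw [hφp (n + 1), hPnext, hPmid]
  have hφpn2 : φp (n - 1) = z (n - 1) * P := by rw [hφp (n - 1)]
  have hφmn : φm n = z n * (P * S n)⁻¹ := by rw [hφm n, hPmid]
  have hφmn1 : φm (n + 1) = z (n + 1) * (P * S n * S (n + 1))⁻¹ := by
    rw [hφm (n + 1), hPnext, hPmid]
  have hφmn2 : φm (n - 1) = z (n - 1) * P⁻¹ := by rw [hφm (n - 1)]
  have claim2 : -(φp (n + 1) + φp (n - 1) - 2 * φp n) + Vz n * φp n = 0 := by
    rw [hφpn, hφpn1, hφpn2, hVz n]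
    field_simp
    ring
  have claim3 : -(φm (n + 1) + φm (n - 1) - 2 * φm n) + Vz n * φm n = 0 := by
    rw [hφmn, hφmn1, hφmn2, hVz n]
    exact keyalg (S n) (S (n + 1)) (z n) (z (n - 1)) (z (n + 1)) P
      (ne_of_gt hzn) (ne_of_gt hzn1) (ne_of_gt hzn2) (ne_of_gt hsn) (ne_of_gt hsn1)
      (ne_of_gt hPpos) k1 k2
  refine ⟨?_, claim2, claim3⟩
  have hφpne : φp n ≠ 0 := by rw [hφpn]; positivity
  have hφmne : φm n ≠ 0 := by
    rw [hφmn]; positivity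
  have e1 : φp (n + 1) + φp (n - 1) - 2 * φp n = Vz n * φp n := by linarith [claim2]
  have e2 : φm (n + 1) + φm (n - 1) - 2 * φm n = Vz n * φm n := by linarith [claim3]
  rw [e1, e2, mul_div_assoc, mul_div_assoc, div_self hφpne, div_self hφmne]
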